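/- Let k be a field of prime characteristic p, let n be an integer with n > 1 that is not divisible by p, define φ(e) := n·p^e − dim_k (k[X,Y]/(X^{p^e}, Y^{p^e}, X^n − Y^n)) for each nonnegative integer e, let ω be the multiplicative order of p modulo n, and let π be the minimal positive period of φ (i.e., the least positive integer π such that φ(e + π) = φ(e) for all nonnegative integers e). Then π = ω or 2·π = ω. -/

import Mathlib

open MvPolynomial

section Dim

variable {k : Type*} [Field k]

/-- the generating ideal -/
noncomputable def Imin (k : Type*) [Field k] (n q : ℕ) : Ideal (MvPolynomial (Fin 2) k) :=
  Ideal.span {(X 0 : MvPolynomial (Fin 2) k) ^ q, X 1 ^ q, X 0 ^ n - X 1 ^ n}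

/-- dimension bound function -/
def Dfun (n q i : ℕ) : ℕ := if i < q % n then q else n * (q / n)

/-- index type for the monomial basis of the quotient -/
abbrev Tix (n q : ℕ) := Σ i : Fin n, Fin (Dfun n q i)

/-- the monomial x^a y^b -/
noncomputable def mn (k : Type*) [Field k] (a b : ℕ) : MvPolynomial (Fin 2) k := X 0 ^ a * X 1 ^ b

/-- normal form target vector of the monomial x^a y^b -/
def vfun (k : Type*) [Field k] (n q a b : ℕ) : Tix n q → k :=
  fun t => if (t.1 : ℕ) = a % n ∧ (t.2 : ℕ) = b + n * (a / n) then 1 else 0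

/-- the normal-form linear map -/
noncomputable def Lmap (k : Type*) [Field k] (n q : ℕ) :
    MvPolynomial (Fin 2) k →ₗ[k] (Tix n q → k) :=
  (basisMonomials (Fin 2) k).constr k (fun d => vfun k n q (d 0) (d 1))

lemma redEq {n a s i : ℕ} (hn : 0 < n) (hi : i < n) (h : a = n * s + i) :
    a % n = i ∧ a / n = s := by
  subst h
  refine ⟨(Nat.mul_add_mod n s i).trans (Nat.mod_eq_of_lt hi), ?_⟩
  rw [Nat.mul_add_div hn, Nat.div_eq_of_lt hi, add_zero]

lemma Dfun_le_q {n q : ℕ} (hn : 0 < n) (i : ℕ) : Dfun n q i ≤ q := by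
  unfold Dfun; split
  · exact le_rfl
  · exact Nat.mul_div_le q n

/-- key arithmetic: reduction of a monomial divisible by x^q lands outside the box -/
lemma natLemma1 {n q : ℕ} (hn : 0 < n) (a : ℕ) :
    Dfun n q ((q + a) % n) ≤ n * ((q + a) / n) := by
  have hq : q = n * (q / n) + q % n := (Nat.div_add_mod q n).symm
  have ha : a = n * (a / n) + a % n := (Nat.div_add_mod a n).symm
  set A := q / n with hA
  set r := q % n with hr
  set s := a / n with hs
  set i := a % n with hi
  have hrn : r < n := Nat.mod_lt _ hn
  have hin : i < n := Nat.mod_lt _ hn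
  by_cases hc : r + i < n
  · have heq : q + a = n * (A + s) + (r + i) := by rw [hq, ha]; ring
    obtain ⟨hm, hd⟩ := redEq hn hc heq
    rw [hm, hd]
    have : ¬ (r + i < r) := by omega
    rw [Dfun, if_neg this]
    have hAs : A ≤ A + s := Nat.le_add_right _ _
    exact mul_le_mul_right hAs n
  · set j := r + i - n with hj
    have hji : r + i = n + j := by omega
    have hjr : j < r := by omega
    have heq : q + a = n * (A + s + 1) + j := by
      calc q + a = n * A + r + (n * s + i) := by rw [← hq, ← ha]
        _ = n * A + n * s + (r + i) := by ring
        _ = n * A + n * s + (n + j) := by rw [hji]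
        _ = n * (A + s + 1) + j := by ring
    obtain ⟨hm, hd⟩ := redEq hn (by omega) heq
    rw [hm, hd, Dfun, if_pos hjr]
    calc q = n * A + r := hq
      _ ≤ n * A + n * s + n * 1 := by omega
      _ = n * (A + s + 1) := by ring

lemma fin2_decomp (d : Fin 2 →₀ ℕ) : d = Finsupp.single 0 (d 0) + Finsupp.single 1 (d 1) := by
  ext x
  fin_cases x <;> simp [Finsupp.single_apply]

lemma mn_eq (a b : ℕ) :
    mn k a b = monomial (Finsupp.single 0 a + Finsupp.single 1 b) (1 : k) := by
  rw [mn, X_pow_eq_monomial, X_pow_eq_monomial, monomial_mul, mul_one]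

lemma monomial_eq_mn (d : Fin 2 →₀ ℕ) (c : k) :
    (monomial d c : MvPolynomial (Fin 2) k) = c • mn k (d 0) (d 1) := by
  rw [mn_eq, ← fin2_decomp, smul_monomial, smul_eq_mul, mul_one]

lemma L_monomial (n q : ℕ) (d : Fin 2 →₀ ℕ) (c : k) :
    Lmap k n q (monomial d c) = c • vfun k n q (d 0) (d 1) := by
  have : (monomial d c : MvPolynomial (Fin 2) k) = c • (basisMonomials (Fin 2) k) d := by
    rw [coe_basisMonomials, smul_monomial, smul_eq_mul, mul_one]
  rw [this, map_smul, Lmap, Module.Basis.constr_basis]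

lemma L_mn (n q a b : ℕ) : Lmap k n q (mn k a b) = vfun k n q a b := by
  have e0 : (Finsupp.single 0 a + Finsupp.single 1 b : Fin 2 →₀ ℕ) 0 = a := by
    simp [Finsupp.single_apply]
  have e1 : (Finsupp.single 0 a + Finsupp.single 1 b : Fin 2 →₀ ℕ) 1 = b := by
    simp [Finsupp.single_apply]
  rw [mn_eq, L_monomial, one_smul, e0, e1]

lemma vfun_xq {n q : ℕ} (hn : 0 < n) (a b : ℕ) : vfun k n q (q + a) b = 0 := by
  funext t
  simp only [vfun, Pi.zero_apply]
  rw [if_neg]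
  rintro ⟨h1, h2⟩
  have h3 := natLemma1 (q := q) hn a
  rw [← h1] at h3
  have h4 : (t.2 : ℕ) < Dfun n q (t.1 : ℕ) := t.2.isLt
  have : Dfun n q (t.1 : ℕ) < Dfun n q (t.1 : ℕ) :=
    calc Dfun n q (t.1 : ℕ) ≤ n * ((q + a) / n) := h3
      _ ≤ b + n * ((q + a) / n) := Nat.le_add_left _ _
      _ = (t.2 : ℕ) := h2.symm
      _ < Dfun n q (t.1 : ℕ) := h4
  exact absurd this (lt_irrefl _)

lemma vfun_yq {n q : ℕ} (hn : 0 < n) (a b : ℕ) : vfun k n q a (q + b) = 0 := by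
  funext t
  simp only [vfun, Pi.zero_apply]
  rw [if_neg]
  rintro ⟨h1, h2⟩
  have h3 : Dfun n q (t.1 : ℕ) ≤ q := Dfun_le_q hn _
  have h4 : (t.2 : ℕ) < Dfun n q (t.1 : ℕ) := t.2.isLt
  omega

lemma vfun_g3 {n q : ℕ} (hn : 0 < n) (a b : ℕ) :
    vfun k n q (n + a) b = vfun k n q a (n + b) := by
  have e1 : (n + a) % n = a % n := by rw [add_comm, Nat.add_mod_right]
  have e2 : (n + a) / n = a / n + 1 := by rw [add_comm, Nat.add_div_right a hn]
  have e3 : b + n * (a / n + 1) = n + b + n * (a / n) := by ring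
  funext t
  simp only [vfun]
  rw [e1, e2, e3]

lemma L_mul_g1 {n q : ℕ} (hn : 0 < n) :
    ∀ g : MvPolynomial (Fin 2) k, Lmap k n q ((X 0) ^ q * g) = 0 := by
  suffices h : (Lmap k n q).comp (LinearMap.mulLeft k ((X 0 : MvPolynomial (Fin 2) k) ^ q)) = 0 by
    intro g
    exact DFunLike.congr_fun h g
  refine (basisMonomials (Fin 2) k).ext fun d => ?_
  simp only [LinearMap.comp_apply, LinearMap.mulLeft_apply, LinearMap.zero_apply,
    coe_basisMonomials]
  rw [X_pow_eq_monomial, monomial_mul, one_mul, L_monomial, one_smul]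
  have e0 : (Finsupp.single 0 q + d : Fin 2 →₀ ℕ) 0 = q + d 0 := by simp
  have e1 : (Finsupp.single 0 q + d : Fin 2 →₀ ℕ) 1 = d 1 := by simp [Finsupp.single_apply]
  rw [e0, e1, vfun_xq hn]

lemma L_mul_g2 {n q : ℕ} (hn : 0 < n) :
    ∀ g : MvPolynomial (Fin 2) k, Lmap k n q ((X 1) ^ q * g) = 0 := by
  suffices h : (Lmap k n q).comp (LinearMap.mulLeft k ((X 1 : MvPolynomial (Fin 2) k) ^ q)) = 0 by
    intro g
    exact DFunLike.congr_fun h g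
  refine (basisMonomials (Fin 2) k).ext fun d => ?_
  simp only [LinearMap.comp_apply, LinearMap.mulLeft_apply, LinearMap.zero_apply,
    coe_basisMonomials]
  rw [X_pow_eq_monomial, monomial_mul, one_mul, L_monomial, one_smul]
  have e0 : (Finsupp.single 1 q + d : Fin 2 →₀ ℕ) 0 = d 0 := by simp [Finsupp.single_apply]
  have e1 : (Finsupp.single 1 q + d : Fin 2 →₀ ℕ) 1 = q + d 1 := by simp
  rw [e0, e1, vfun_yq hn]

lemma L_mul_g3 {n q : ℕ} (hn : 0 < n) :
    ∀ g : MvPolynomial (Fin 2) k, Lmap k n q (((X 0) ^ n - (X 1) ^ n) * g) = 0 := by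
  suffices h : (Lmap k n q).comp
      (LinearMap.mulLeft k ((X 0 : MvPolynomial (Fin 2) k) ^ n - X 1 ^ n)) = 0 by
    intro g
    exact DFunLike.congr_fun h g
  refine (basisMonomials (Fin 2) k).ext fun d => ?_
  simp only [LinearMap.comp_apply, LinearMap.mulLeft_apply, LinearMap.zero_apply,
    coe_basisMonomials]
  rw [sub_mul, map_sub]
  rw [X_pow_eq_monomial, X_pow_eq_monomial, monomial_mul, monomial_mul, one_mul,
    L_monomial, L_monomial, one_smul, one_smul]
  have e00 : (Finsupp.single 0 n + d : Fin 2 →₀ ℕ) 0 = n + d 0 := by simp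
  have e01 : (Finsupp.single 0 n + d : Fin 2 →₀ ℕ) 1 = d 1 := by simp [Finsupp.single_apply]
  have e10 : (Finsupp.single 1 n + d : Fin 2 →₀ ℕ) 0 = d 0 := by simp [Finsupp.single_apply]
  have e11 : (Finsupp.single 1 n + d : Fin 2 →₀ ℕ) 1 = n + d 1 := by simp
  rw [e00, e01, e10, e11, vfun_g3 hn, sub_self]

/-- membership of I implies L vanishes -/
lemma L_vanish {n q : ℕ} (hn : 0 < n) : ∀ f ∈ Imin k n q, Lmap k n q f = 0 := by
  intro f hf
  rw [Imin] at hf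
  obtain ⟨a1, z, hz, rfl⟩ := Ideal.mem_span_insert.mp hf
  obtain ⟨a2, w, hw, rfl⟩ := Ideal.mem_span_insert.mp hz
  obtain ⟨a3, rfl⟩ := Ideal.mem_span_singleton.mp hw
  rw [map_add, map_add]
  rw [mul_comm a1, mul_comm a2]
  rw [L_mul_g1 hn, L_mul_g2 hn, L_mul_g3 hn]
  simp

/-- shifting lemma: x^(ns+i) y^b ≡ x^i y^(b+ns) mod I -/
lemma gen3_mem (n q : ℕ) : (X 0 : MvPolynomial (Fin 2) k) ^ n - X 1 ^ n ∈ Imin k n q := by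
  apply Ideal.subset_span
  simp [Set.mem_insert_iff]

lemma gen1_mem (n q : ℕ) : (X 0 : MvPolynomial (Fin 2) k) ^ q ∈ Imin k n q := by
  apply Ideal.subset_span
  simp [Set.mem_insert_iff]

lemma gen2_mem (n q : ℕ) : (X 1 : MvPolynomial (Fin 2) k) ^ q ∈ Imin k n q := by
  apply Ideal.subset_span
  simp [Set.mem_insert_iff]

lemma mk_shift {n q : ℕ} (s i b : ℕ) :
    Ideal.Quotient.mk (Imin k n q) (mn k (n * s + i) b)
      = Ideal.Quotient.mk (Imin k n q) (mn k i (b + n * s)) := by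
  induction s generalizing b with
  | zero => simp [mn]
  | succ s ih =>
    have step : Ideal.Quotient.mk (Imin k n q) (mn k (n * (s + 1) + i) b)
        = Ideal.Quotient.mk (Imin k n q) (mn k (n * s + i) (b + n)) := by
      rw [Ideal.Quotient.eq]
      have key : mn k (n * (s + 1) + i) b - mn k (n * s + i) (b + n)
          = mn k (n * s + i) b * (X 0 ^ n - X 1 ^ n) := by
        rw [mn, mn, mn]
        ring
      rw [key]
      exact Ideal.mul_mem_left _ _ (gen3_mem n q)
    rw [step, ih (b + n)]
    congr 1
    rw [mn, mn]
    congr 1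
    ring

lemma mk_zero' {n q a c : ℕ} (hn : 0 < n) (ha : a < n) (hc : Dfun n q a ≤ c) :
    Ideal.Quotient.mk (Imin k n q) (mn k a c) = 0 := by
  by_cases h : a < q % n
  · -- D = q, so c ≥ q and y^q divides
    have hq : q ≤ c := by rw [Dfun, if_pos h] at hc; exact hc
    rw [Ideal.Quotient.eq_zero_iff_mem]
    have : mn k a c = (X 0 ^ a * X 1 ^ (c - q)) * X 1 ^ q := by
      rw [mn, mul_assoc, ← pow_add]
      congr 2
      omega
    rw [this]
    exact Ideal.mul_mem_left _ _ (gen2_mem n q)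
  · -- D = n * (q/n); shift up then x^q divides
    have hq : n * (q / n) ≤ c := by rw [Dfun, if_neg h] at hc; exact hc
    have hshift := mk_shift (k := k) (n := n) (q := q) (q / n) a (c - n * (q / n))
    have he : c - n * (q / n) + n * (q / n) = c := by omega
    rw [he] at hshift
    rw [← hshift, Ideal.Quotient.eq_zero_iff_mem]
    have hge : q ≤ n * (q / n) + a := by
      have := Nat.div_add_mod q n
      omega
    have : mn k (n * (q / n) + a) (c - n * (q / n))
        = X 0 ^ q * (X 0 ^ (n * (q / n) + a - q) * X 1 ^ (c - n * (q / n))) := by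
      rw [mn, ← mul_assoc, ← pow_add]
      congr 2
      omega
    rw [this]
    exact Ideal.mul_mem_right _ _ (gen1_mem n q)

/-- vanishing lemma: x^a y^c ∈ I once c ≥ D a -/
lemma tix_eq {n q : ℕ} (t t' : Tix n q) (h1 : (t.1 : ℕ) = (t'.1 : ℕ))
    (h2 : (t.2 : ℕ) = (t'.2 : ℕ)) : t = t' := by
  obtain ⟨i1, j1⟩ := t
  obtain ⟨i2, j2⟩ := t'
  have hi : i1 = i2 := Fin.ext h1
  subst hi
  exact congrArg (Sigma.mk i1) (Fin.ext h2)

lemma mem_span_mk {n q : ℕ} (hn : 0 < n) (a b : ℕ) :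
    Ideal.Quotient.mk (Imin k n q) (mn k a b) ∈ Submodule.span k
      (Set.range fun t : Tix n q =>
        Ideal.Quotient.mk (Imin k n q) (mn k (t.1 : ℕ) (t.2 : ℕ))) := by
  have hs := mk_shift (k := k) (n := n) (q := q) (a / n) (a % n) b
  have ha : n * (a / n) + a % n = a := Nat.div_add_mod a n
  rw [ha] at hs
  by_cases hcb : b + n * (a / n) < Dfun n q (a % n)
  · refine Submodule.subset_span ⟨⟨⟨a % n, Nat.mod_lt _ hn⟩, ⟨b + n * (a / n), hcb⟩⟩, ?_⟩
    exact hs.symm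
  · rw [hs, mk_zero' hn (Nat.mod_lt _ hn) (by omega)]
    exact Submodule.zero_mem _

lemma card_Tix (n q : ℕ) (hn : 0 < n) :
    Fintype.card (Tix n q) = n ^ 2 * (q / n) + (q % n) ^ 2 := by
  classical
  rw [Fintype.card_sigma]
  simp only [Fintype.card_fin]
  rw [Fin.sum_univ_eq_sum_range (fun i => Dfun n q i) n]
  have hr : q % n ≤ n := le_of_lt (Nat.mod_lt _ hn)
  rw [Finset.range_eq_Ico,
    ← Finset.sum_Ico_consecutive (fun i => Dfun n q i) (Nat.zero_le (q % n)) hr]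
  have h1 : (∑ i ∈ Finset.Ico 0 (q % n), Dfun n q i) = (q % n) * q := by
    rw [Finset.sum_congr rfl (fun i hi => ?_), Finset.sum_const, Nat.card_Ico,
      Nat.sub_zero, smul_eq_mul]
    rw [Dfun, if_pos (Finset.mem_Ico.mp hi).2]
  have h2 : (∑ i ∈ Finset.Ico (q % n) n, Dfun n q i) = (n - q % n) * (n * (q / n)) := by
    rw [Finset.sum_congr rfl (fun i hi => ?_), Finset.sum_const, Nat.card_Ico, smul_eq_mul]
    rw [Dfun, if_neg (by have := (Finset.mem_Ico.mp hi).1; omega)]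
  rw [h1, h2]
  set r := q % n with hr2
  set A := q / n with hA2
  have hq : n * A + r = q := Nat.div_add_mod q n
  have hq' : (n : ℤ) * (A : ℤ) + (r : ℤ) = (q : ℤ) := by
    exact_mod_cast congrArg (Nat.cast : ℕ → ℤ) hq
  zify [hr]
  linear_combination (-((r : ℤ))) * hq'

lemma dim_formula (n q : ℕ) (hn : 1 < n) :
    Module.finrank k (MvPolynomial (Fin 2) k ⧸ Imin k n q)
      = n ^ 2 * (q / n) + (q % n) ^ 2 := by
  classical
  have hn0 : 0 < n := by omega
  set I : Ideal (MvPolynomial (Fin 2) k) := Imin k n q with hI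
  set v : Tix n q → (MvPolynomial (Fin 2) k ⧸ I) :=
    fun t => Ideal.Quotient.mk I (mn k (t.1 : ℕ) (t.2 : ℕ)) with hv
  have hQ : ⇑(Ideal.Quotient.mkₐ k I).toLinearMap = ⇑(Ideal.Quotient.mk I) := rfl
  -- linear independence
  have hli : LinearIndependent k v := by
    rw [Fintype.linearIndependent_iff]
    intro g hg t₀
    have hsum : Ideal.Quotient.mk I (∑ t : Tix n q, g t • mn k (t.1 : ℕ) (t.2 : ℕ)) = 0 := by
      rw [← hQ, map_sum]
      simp only [map_smul]
      rw [hQ]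
      exact hg
    have hmem : (∑ t : Tix n q, g t • mn k (t.1 : ℕ) (t.2 : ℕ)) ∈ I :=
      Ideal.Quotient.eq_zero_iff_mem.mp hsum
    have hL : Lmap k n q (∑ t : Tix n q, g t • mn k (t.1 : ℕ) (t.2 : ℕ)) = 0 :=
      L_vanish hn0 _ hmem
    rw [map_sum] at hL
    simp only [map_smul, L_mn] at hL
    have hL0 := congrFun hL t₀
    rw [Finset.sum_apply] at hL0
    have hval : ∀ t : Tix n q, vfun k n q (t.1 : ℕ) (t.2 : ℕ) t₀
        = if t₀ = t then (1 : k) else 0 := by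
      intro t
      simp only [vfun]
      by_cases h : t₀ = t
      · rw [if_pos h, if_pos]
        subst h
        refine ⟨(Nat.mod_eq_of_lt t₀.1.isLt).symm, ?_⟩
        rw [Nat.div_eq_of_lt t₀.1.isLt, mul_zero, add_zero]
      · rw [if_neg h, if_neg]
        rintro ⟨h1, h2⟩
        apply h
        apply tix_eq
        · rw [Nat.mod_eq_of_lt t.1.isLt] at h1
          exact h1
        · rw [Nat.div_eq_of_lt t.1.isLt, mul_zero, add_zero] at h2
          exact h2
    simp only [Pi.smul_apply, hval, smul_eq_mul, mul_ite, mul_one, mul_zero,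
      Finset.sum_ite_eq, Finset.mem_univ, if_true] at hL0
    exact hL0
  -- spanning
  have hsp : ⊤ ≤ Submodule.span k (Set.range v) := by
    intro x _
    obtain ⟨f, rfl⟩ := Ideal.Quotient.mk_surjective x
    have hf : f ∈ Submodule.span k (Set.range ⇑(basisMonomials (Fin 2) k)) := by
      rw [Module.Basis.span_eq]; trivial
    refine Submodule.span_induction
      (p := fun x _ => Ideal.Quotient.mk I x ∈ Submodule.span k (Set.range v)) ?_ ?_ ?_ ?_ hf
    · rintro x ⟨d, rfl⟩
      rw [coe_basisMonomials]
      have : ((fun s => (monomial s) (1 : k)) d : MvPolynomial (Fin 2) k) = mn k (d 0) (d 1) := by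
        show (monomial d 1 : MvPolynomial (Fin 2) k) = mn k (d 0) (d 1)
        rw [mn_eq, ← fin2_decomp]
      rw [this]
      exact mem_span_mk hn0 (d 0) (d 1)
    · simp
    · intro x y _ _ hx hy
      rw [RingHom.map_add]
      exact Submodule.add_mem _ hx hy
    · intro a x _ hx
      have : Ideal.Quotient.mk I (a • x) = a • Ideal.Quotient.mk I x := by
        rw [← hQ, map_smul]
      rw [this]
      exact Submodule.smul_mem _ a hx
  let B : Module.Basis (Tix n q) k (MvPolynomial (Fin 2) k ⧸ I) := Module.Basis.mk hli hsp
  rw [Module.finrank_eq_card_basis B, card_Tix n q hn0]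

end Dim

/-- Theorem 1(2), second half: the minimal positive period `π` of the periodic term `φ`
satisfies `π = ω` or `2π = ω`, where `ω` is the multiplicative order of `p` modulo `n`. -/
theorem stmt3 {k : Type*} [Field k] (p : ℕ) (hp : p.Prime) [CharP k p]
    (n : ℕ) (hn : 1 < n) (hpn : ¬ p ∣ n)
    (φ : ℕ → ℤ)
    (hφ : ∀ e : ℕ, φ e = (n : ℤ) * (p : ℤ) ^ e -
      (Module.finrank k (MvPolynomial (Fin 2) k ⧸
        Ideal.span {(X 0 : MvPolynomial (Fin 2) k) ^ p ^ e, X 1 ^ p ^ e,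
          X 0 ^ n - X 1 ^ n}) : ℤ))
    (ω : ℕ) (hω : ω = orderOf ((p : ZMod n)))
    (π : ℕ) (hπ : IsLeast {m : ℕ | 0 < m ∧ ∀ e : ℕ, φ (e + m) = φ e} π) :
    π = ω ∨ 2 * π = ω := by
  have hn0 : 0 < n := by omega
  haveI : NeZero n := ⟨by omega⟩
  -- rewrite φ via the dimension formula
  have hφ' : ∀ e : ℕ, φ e = ((p ^ e % n : ℕ) : ℤ) * ((n : ℤ) - ((p ^ e % n : ℕ) : ℤ)) := by
    intro e
    have hd := dim_formula (k := k) n (p ^ e) hn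
    have hq : (Ideal.span {(X 0 : MvPolynomial (Fin 2) k) ^ p ^ e, X 1 ^ p ^ e,
        X 0 ^ n - X 1 ^ n}) = Imin k n (p ^ e) := rfl
    rw [hφ e, hq, hd]
    set dd := p ^ e / n with hdd
    set rr := p ^ e % n with hrr
    have hdm : n * dd + rr = p ^ e := Nat.div_add_mod _ _
    have hdm' : (n : ℤ) * (dd : ℤ) + (rr : ℤ) = ((p : ℤ)) ^ e := by
      exact_mod_cast congrArg (Nat.cast : ℕ → ℤ) hdm
    push_cast
    linear_combination (-(n : ℤ)) * hdm'
  -- basic unit facts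
  have hcop : Nat.Coprime p n := (hp.coprime_iff_not_dvd).mpr hpn
  have hu : IsUnit ((p : ZMod n)) := (ZMod.isUnit_iff_coprime p n).mpr hcop
  have hω0 : 0 < ω := by
    have h1 : orderOf ((p : ZMod n)) = orderOf hu.unit := by
      rw [← orderOf_units, hu.unit_spec]
    rw [hω, h1]
    exact orderOf_pos _
  have hpow : ((p : ZMod n)) ^ ω = 1 := by rw [hω]; exact pow_orderOf_eq_one _
  -- ω is a period
  have hmem : ω ∈ {m : ℕ | 0 < m ∧ ∀ e : ℕ, φ (e + m) = φ e} := by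
    refine ⟨hω0, fun e => ?_⟩
    have : p ^ (e + ω) % n = p ^ e % n := by
      have : ((p ^ (e + ω) : ℕ) : ZMod n) = ((p ^ e : ℕ) : ZMod n) := by
        push_cast
        rw [pow_add, hpow, mul_one]
      exact (ZMod.natCast_eq_natCast_iff _ _ _).mp this
    rw [hφ', hφ', this]
  obtain ⟨⟨hπ0, hper⟩, hlb⟩ := hπ
  have hπω : π ≤ ω := hlb hmem
  -- evaluate the period condition at e = 0
  have h0 : φ π = φ 0 := by simpa using hper 0
  have hr0 : p ^ 0 % n = 1 := by simp [Nat.mod_eq_of_lt hn]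
  have hrange : 0 < p ^ π % n := by
    rcases Nat.eq_zero_or_pos (p ^ π % n) with h | h
    swap
    · exact h
    · exfalso
      have hd : n ∣ p ^ π := Nat.dvd_of_mod_eq_zero h
      have := Nat.Coprime.eq_one_of_dvd ((Nat.Coprime.pow_left π hcop).symm) hd
      omega
  have hlt : p ^ π % n < n := Nat.mod_lt _ hn0
  -- quadratic: r(n-r) = 1(n-1) implies r = 1 or r = n-1
  have hquad : p ^ π % n = 1 ∨ p ^ π % n = n - 1 := by
    have he : ((p ^ π % n : ℕ) : ℤ) * ((n : ℤ) - ((p ^ π % n : ℕ) : ℤ))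
        = 1 * ((n : ℤ) - 1) := by
      have := h0
      rw [hφ', hφ', hr0] at this
      push_cast at this ⊢
      linarith [this]
    set a : ℤ := ((p ^ π % n : ℕ) : ℤ) with ha
    have key : (a - 1) * ((n : ℤ) - 1 - a) = 0 := by linear_combination he
    rcases mul_eq_zero.mp key with h | h
    · left; omega
    · right; omega
  -- convert to ZMod statements
  rcases hquad with h1 | h1
  · left
    have : ((p : ZMod n)) ^ π = 1 := by
      have : ((p ^ π % n : ℕ) : ZMod n) = ((1 : ℕ) : ZMod n) := by rw [h1]
      rwa [ZMod.natCast_mod, Nat.cast_pow, Nat.cast_one] at this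
    have hdvd : ω ∣ π := hω ▸ orderOf_dvd_of_pow_eq_one this
    exact Nat.le_antisymm hπω (Nat.le_of_dvd hπ0 hdvd)
  · have hneg : ((p : ZMod n)) ^ π = -1 := by
      have : ((p ^ π % n : ℕ) : ZMod n) = ((n - 1 : ℕ) : ZMod n) := by rw [h1]
      rw [ZMod.natCast_mod, Nat.cast_pow] at this
      rw [this, Nat.cast_sub (by omega), ZMod.natCast_self, Nat.cast_one, zero_sub]
    have hsq : ((p : ZMod n)) ^ (2 * π) = 1 := by
      rw [two_mul, pow_add, hneg, neg_mul_neg, one_mul]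
    have hdvd : ω ∣ 2 * π := hω ▸ orderOf_dvd_of_pow_eq_one hsq
    obtain ⟨c, hc⟩ := hdvd
    match c, hc with
    | 0, hc => omega
    | 1, hc => right; omega
    | (c + 2), hc =>
      left
      have : 2 * ω ≤ ω * (c + 2) := by nlinarith
      omega
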